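/- Let m ≥ 2, 1 ≤ r ≤ m − 1 and ℓ = m − r ≥ 1. Then the second generalized Hamming weight of the binary shortened projective Reed–Muller code PRM(r, m−1) is at most 3·2^{ℓ−1}: there exist two linearly independent coefficient vectors a and a' such that the set of coordinates S of [m] with |S| ≥ r at which f_a(S) ≠ 0 or f_{a'}(S) ≠ 0 has cardinality at most 3·2^{ℓ−1}. -/

import Mathlib

lemma aux_card_filter_lt (m r : ℕ) (h : r ≤ m) :
    (Finset.univ.filter (fun i : Fin m => (i:ℕ) < r)).card = r := by
  rw [← Finset.card_range r]
  apply Finset.card_nbij (fun i => ((i : Fin m) : ℕ))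
  · intro a ha; simpa using (Finset.mem_filter.mp ha).2
  · intro a _ b _ hab; exact Fin.val_injective hab
  · intro b hb
    simp only [Finset.coe_range, Set.mem_Iio] at hb
    exact ⟨⟨b, lt_of_lt_of_le hb h⟩, by simp [hb], rfl⟩

lemma aux_card_supersets {m : ℕ} (T : Finset (Fin m)) :
    (Finset.univ.filter (fun S => T ⊆ S)).card = 2 ^ (m - T.card) := by
  have h : (Finset.univ.filter (fun S => T ⊆ S)).card = Tᶜ.powerset.card := by
    apply Finset.card_nbij (fun S => S \ T)
    · intro S hS
      simp only [Finset.mem_coe, Finset.mem_powerset, Finset.subset_iff, Finset.mem_sdiff,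
        Finset.mem_compl]
      exact fun x hx => hx.2
    · intro S₁ h₁ S₂ h₂ hEq
      simp only [Finset.coe_filter, Set.mem_setOf_eq, Finset.mem_univ, true_and] at h₁ h₂
      simp only at hEq
      have : S₁ \ T ∪ T = S₂ \ T ∪ T := by rw [hEq]
      rwa [Finset.sdiff_union_of_subset h₁, Finset.sdiff_union_of_subset h₂] at this
    · intro U hU
      simp only [Finset.mem_coe, Finset.mem_powerset] at hU
      refine ⟨U ∪ T, by simp, ?_⟩
      simp only [Finset.union_sdiff_right]
      exact Finset.sdiff_eq_self_of_disjoint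
        (Finset.disjoint_left.mpr fun x hx => (Finset.mem_compl.mp (hU hx)))
  rw [h, Finset.card_powerset, Finset.card_compl, Fintype.card_fin]

/-- The second generalized Hamming weight of the binary shortened
projective Reed–Muller code PRM(r, m−1) is at most `3·2^(ℓ−1)` (`ℓ = m − r ≥ 1`): there
exist coefficient vectors `a`, `a'` whose codewords are linearly independent and whose
union of supports has cardinality at most `3·2^(ℓ−1)`. -/
theorem stmt_11 (m r : ℕ) (hm : 2 ≤ m) (hr : 1 ≤ r) (hrm : r ≤ m - 1) :
    ∃ a a' : Finset (Fin m) → ZMod 2,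
      LinearIndependent (ZMod 2)
        ![(fun S : {S : Finset (Fin m) // r ≤ S.card} =>
            ∑ T ∈ S.1.powerset.filter (fun T => T.card = r), a T),
          (fun S : {S : Finset (Fin m) // r ≤ S.card} =>
            ∑ T ∈ S.1.powerset.filter (fun T => T.card = r), a' T)] ∧
      (Finset.univ.filter (fun S : {S : Finset (Fin m) // r ≤ S.card} =>
          (∑ T ∈ S.1.powerset.filter (fun T => T.card = r), a T) ≠ 0 ∨
          (∑ T ∈ S.1.powerset.filter (fun T => T.card = r), a' T) ≠ 0)).card
        ≤ 3 * 2 ^ (m - r - 1) := by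
  have hrm' : r < m := by omega
  set T₀ : Finset (Fin m) := Finset.univ.filter (fun i : Fin m => (i:ℕ) < r) with hT₀def
  set x : Fin m := ⟨r, hrm'⟩ with hxdef
  set F : Finset (Fin m) := Finset.univ.filter (fun i : Fin m => (i:ℕ) < r - 1) with hFdef
  set T₁ : Finset (Fin m) := insert x F with hT₁def
  have hxF : x ∉ F := by simp [hFdef, hxdef]
  have hxT₀ : x ∉ T₀ := by simp [hT₀def, hxdef]
  have cardT₀ : T₀.card = r := aux_card_filter_lt m r (le_of_lt hrm')
  have cardF : F.card = r - 1 := aux_card_filter_lt m (r-1) (by omega)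
  have cardT₁ : T₁.card = r := by
    rw [hT₁def, Finset.card_insert_of_notMem hxF, cardF]; omega
  have hFT₀ : F ⊆ T₀ := by
    intro i hi
    simp only [hFdef, Finset.mem_filter, Finset.mem_univ, true_and] at hi
    simp only [hT₀def, Finset.mem_filter, Finset.mem_univ, true_and]
    omega
  have hUnion : T₀ ∪ T₁ = insert x T₀ := by
    rw [hT₁def, Finset.union_insert, Finset.union_eq_left.mpr hFT₀]
  have cardUnion : (T₀ ∪ T₁).card = r + 1 := by
    rw [hUnion, Finset.card_insert_of_notMem hxT₀, cardT₀]
  -- non-inclusions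
  have hnT₁T₀ : ¬ T₁ ⊆ T₀ := fun hsub => hxT₀ (hsub (Finset.mem_insert_self x F))
  have hy : ((⟨r - 1, by omega⟩ : Fin m) : ℕ) = r - 1 := rfl
  have hnT₀T₁ : ¬ T₀ ⊆ T₁ := by
    intro hsub
    have hyT₀ : (⟨r - 1, by omega⟩ : Fin m) ∈ T₀ := by
      simp only [hT₀def, Finset.mem_filter, Finset.mem_univ, true_and]; omega
    have := hsub hyT₀
    simp only [hT₁def, Finset.mem_insert, hFdef, Finset.mem_filter, Finset.mem_univ,
      true_and, hxdef, Fin.mk.injEq] at this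
    omega
  have heval : ∀ (W : Finset (Fin m)), W.card = r → ∀ S : Finset (Fin m),
      (∑ T ∈ S.powerset.filter (fun T => T.card = r), (if T = W then (1:ZMod 2) else 0)) =
        if W ⊆ S then 1 else 0 := by
    intro W hcW S
    rw [Finset.sum_ite_eq']
    simp [Finset.mem_filter, Finset.mem_powerset, hcW]
  refine ⟨fun T => if T = T₀ then 1 else 0, fun T => if T = T₁ then 1 else 0, ?_, ?_⟩
  · -- linear independence
    rw [LinearIndependent.pair_iff]
    intro s t hst
    have h0 := congrFun hst ⟨T₀, by rw [cardT₀]⟩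
    have h1 := congrFun hst ⟨T₁, by rw [cardT₁]⟩
    simp only [Pi.add_apply, Pi.smul_apply, Pi.zero_apply, smul_eq_mul] at h0 h1
    rw [heval T₀ cardT₀, heval T₁ cardT₁] at h0 h1
    simp only [Finset.Subset.refl, if_pos, if_neg hnT₁T₀, if_neg hnT₀T₁,
      mul_one, mul_zero, add_zero, zero_add] at h0 h1
    exact ⟨h0, h1⟩
  · -- cardinality bound
    have key : (Finset.univ.filter (fun S : {S : Finset (Fin m) // r ≤ S.card} =>
          (∑ T ∈ S.1.powerset.filter (fun T => T.card = r),
            (if T = T₀ then (1:ZMod 2) else 0)) ≠ 0 ∨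
          (∑ T ∈ S.1.powerset.filter (fun T => T.card = r),
            (if T = T₁ then (1:ZMod 2) else 0)) ≠ 0)).card ≤
        (Finset.univ.filter (fun S : Finset (Fin m) => T₀ ⊆ S ∨ T₁ ⊆ S)).card := by
      apply Finset.card_le_card_of_injOn Subtype.val
      · intro S hS
        simp only [Finset.mem_coe, Finset.mem_filter, Finset.mem_univ, true_and] at hS ⊢
        rw [heval T₀ cardT₀, heval T₁ cardT₁] at hS
        rcases hS with h | h
        · left; by_contra hc; simp [hc] at h
        · right; by_contra hc; simp [hc] at h
      · exact fun a _ b _ h => Subtype.ext h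
    refine le_trans key ?_
    have hsplit : (Finset.univ.filter (fun S : Finset (Fin m) => T₀ ⊆ S ∨ T₁ ⊆ S)) =
        (Finset.univ.filter (fun S => T₀ ⊆ S)) ∪ (Finset.univ.filter (fun S => T₁ ⊆ S)) := by
      rw [← Finset.filter_or]
    have hinter : (Finset.univ.filter (fun S : Finset (Fin m) => T₀ ⊆ S)) ∩
        (Finset.univ.filter (fun S => T₁ ⊆ S)) =
        Finset.univ.filter (fun S => T₀ ∪ T₁ ⊆ S) := by
      rw [← Finset.filter_and]
      apply Finset.filter_congr
      intro S _
      simp [Finset.union_subset_iff]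
    have hcu := Finset.card_union_add_card_inter
      (Finset.univ.filter (fun S : Finset (Fin m) => T₀ ⊆ S))
      (Finset.univ.filter (fun S => T₁ ⊆ S))
    rw [hinter] at hcu
    have hA := aux_card_supersets T₀
    have hB := aux_card_supersets T₁
    have hC := aux_card_supersets (T₀ ∪ T₁)
    rw [cardT₀] at hA
    rw [cardT₁] at hB
    rw [cardUnion] at hC
    rw [hsplit]
    rw [hA, hB, hC] at hcu
    have hpow : 2 ^ (m - r) = 2 * 2 ^ (m - r - 1) := by
      have h1 : m - r = (m - r - 1) + 1 := by omega
      conv_lhs => rw [h1]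
      rw [pow_succ]; ring
    have hmr1 : m - (r + 1) = m - r - 1 := by omega
    rw [hmr1] at hcu
    omega
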